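/- The assignment x_i ↦ x_i extends to a well-defined group homomorphism G_F → G_BF, and this homomorphism is injective; that is, the generators x_i generate a copy of Thompson's group F inside G_BF. -/

import Mathlib

/-- Relator corresponding to the equation `u = v`. -/
def grel {α : Type*} (u v : FreeGroup α) : FreeGroup α := u * v⁻¹

/-- Generators of the pure braided Thompson group `BF`.  `a i k` denotes
`α_{i+1, i+k+2}` and `b i k` denotes `β_{i+1, i+k+2}` (so that exactly the
generators `α_{ij}, β_{ij}` with `1 ≤ i < j` occur). -/
inductive BFGen : Type
  | x : ℕ → BFGen
  | a : ℕ → ℕ → BFGen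
  | b : ℕ → ℕ → BFGen

namespace BFGen

/-- The free-group letter `x_i`. -/
def X (i : ℕ) : FreeGroup BFGen := FreeGroup.of (BFGen.x i)

/-- The free-group letter `α_{ij}` (meaningful for `1 ≤ i < j`). -/
def A (i j : ℕ) : FreeGroup BFGen := FreeGroup.of (BFGen.a (i - 1) (j - i - 1))

/-- The free-group letter `β_{ij}` (meaningful for `1 ≤ i < j`). -/
def B (i j : ℕ) : FreeGroup BFGen := FreeGroup.of (BFGen.b (i - 1) (j - i - 1))

/-- The defining relations of `BF`. -/
def bfRels : Set (FreeGroup BFGen) :=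
  { g |
    -- (A)
    (∃ i j, i < j ∧ g = grel (X j * X i) (X i * X (j + 1))) ∨
    -- (B1)
    (∃ r s i j, 1 ≤ r ∧ r < s ∧ ((s < i ∧ i < j) ∨ (1 ≤ i ∧ i < r ∧ s < j)) ∧
      g = grel ((A r s)⁻¹ * A i j * A r s) (A i j)) ∨
    -- (B2) (s = i)
    (∃ r s j, 1 ≤ r ∧ r < s ∧ s < j ∧
      g = grel ((A r s)⁻¹ * A s j * A r s) (A r j * A s j * (A r j)⁻¹)) ∨
    -- (B3) (r = i)
    (∃ i s j, 1 ≤ i ∧ i < s ∧ s < j ∧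
      g = grel ((A i s)⁻¹ * A i j * A i s)
        ((A i j * A s j) * A i j * (A i j * A s j)⁻¹)) ∨
    -- (B4)
    (∃ r i s j, 1 ≤ r ∧ r < i ∧ i < s ∧ s < j ∧
      g = grel ((A r s)⁻¹ * A i j * A r s)
        ((A r j * A s j * (A r j)⁻¹ * (A s j)⁻¹) * A i j *
          (A r j * A s j * (A r j)⁻¹ * (A s j)⁻¹)⁻¹)) ∨
    -- (B5)
    (∃ r s i j, 1 ≤ r ∧ r < s ∧ ((s < i ∧ i < j) ∨ (1 ≤ i ∧ i < r ∧ s < j)) ∧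
      g = grel ((A r s)⁻¹ * B i j * A r s) (B i j)) ∨
    -- (B6) (s = i)
    (∃ r s j, 1 ≤ r ∧ r < s ∧ s < j ∧
      g = grel ((A r s)⁻¹ * B s j * A r s) (B r j * B s j * (B r j)⁻¹)) ∨
    -- (B7) (r = i)
    (∃ i s j, 1 ≤ i ∧ i < s ∧ s < j ∧
      g = grel ((A i s)⁻¹ * B i j * A i s)
        ((B i j * B s j) * B i j * (B i j * B s j)⁻¹)) ∨
    -- (B8)
    (∃ r i s j, 1 ≤ r ∧ r < i ∧ i < s ∧ s < j ∧
      g = grel ((A r s)⁻¹ * B i j * A r s)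
        ((B r j * B s j * (B r j)⁻¹ * (B s j)⁻¹) * B i j *
          (B r j * B s j * (B r j)⁻¹ * (B s j)⁻¹)⁻¹)) ∨
    -- (C)
    (∃ i j, 1 ≤ i ∧ i < j ∧ g = grel (B i j) (B i (j + 1) * A i j)) ∨
    -- (D1) (k < i - 1)
    (∃ i j k, 1 ≤ i ∧ i < j ∧ k + 1 < i ∧
      g = grel (A i j * X k) (X k * A (i + 1) (j + 1))) ∨
    -- (D2) (k = i - 1)
    (∃ i j, 1 ≤ i ∧ i < j ∧
      g = grel (A i j * X (i - 1)) (X (i - 1) * A (i + 1) (j + 1) * A i (j + 1))) ∨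
    -- (D3) (i - 1 < k < j - 1)
    (∃ i j k, 1 ≤ i ∧ i < j ∧ i ≤ k ∧ k + 1 < j ∧
      g = grel (A i j * X k) (X k * A i (j + 1))) ∨
    -- (D4) (k = j - 1)
    (∃ i j, 1 ≤ i ∧ i < j ∧
      g = grel (A i j * X (j - 1)) (X (j - 1) * A i (j + 1) * A i j)) ∨
    -- (D5) (k > j - 1)
    (∃ i j k, 1 ≤ i ∧ i < j ∧ j ≤ k ∧ g = grel (A i j * X k) (X k * A i j)) ∨
    -- (D6) (k < i - 1)
    (∃ i j k, 1 ≤ i ∧ i < j ∧ k + 1 < i ∧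
      g = grel (B i j * X k) (X k * B (i + 1) (j + 1))) ∨
    -- (D7) (k = i - 1)
    (∃ i j, 1 ≤ i ∧ i < j ∧
      g = grel (B i j * X (i - 1)) (X (i - 1) * B (i + 1) (j + 1) * B i (j + 1))) ∨
    -- (D8) (i - 1 < k < j - 1)
    (∃ i j k, 1 ≤ i ∧ i < j ∧ i ≤ k ∧ k + 1 < j ∧
      g = grel (B i j * X k) (X k * B i (j + 1))) ∨
    -- (D9) (k ≥ j - 1)
    (∃ i j k, 1 ≤ i ∧ i < j ∧ j ≤ k + 1 ∧
      g = grel (B i j * X k) (X k * B i j)) }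

end BFGen

/-- The pure braided Thompson group `BF`, via its infinite presentation. -/
abbrev GBF : Type := PresentedGroup BFGen.bfRels

namespace GBF

/-- The generator `x_i` of `BF`. -/
def xg (i : ℕ) : GBF := PresentedGroup.of (BFGen.x i)

/-- The generator `α_{ij}` of `BF` (meaningful for `1 ≤ i < j`). -/
def ag (i j : ℕ) : GBF := PresentedGroup.of (BFGen.a (i - 1) (j - i - 1))

/-- The generator `β_{ij}` of `BF` (meaningful for `1 ≤ i < j`). -/
def bg (i j : ℕ) : GBF := PresentedGroup.of (BFGen.b (i - 1) (j - i - 1))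

end GBF

/-- The defining relations of Thompson's group `F`:
`x_j x_i = x_i x_{j+1}` for `j > i`. -/
def fRels : Set (FreeGroup ℕ) :=
  { g | ∃ i j : ℕ, i < j ∧
      g = grel (FreeGroup.of j * FreeGroup.of i) (FreeGroup.of i * FreeGroup.of (j + 1)) }

/-- Thompson's group `F`, via its infinite presentation. -/
abbrev GF : Type := PresentedGroup fRels

/-- The assignment `x_i ↦ x_i` extends to a well-defined group homomorphism
`F → BF`, and this homomorphism is injective. -/
theorem f_to_bf_injective :
    ∃ φ : GF →* GBF,
      (∀ i : ℕ, φ (PresentedGroup.of i) = GBF.xg i) ∧ Function.Injective φ := by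
  -- the relation x_j x_i = x_i x_{j+1} holds in GBF
  have hrel : ∀ i j : ℕ, i < j → GBF.xg j * GBF.xg i = GBF.xg i * GBF.xg (j + 1) := by
    intro i j hij
    have hmem : grel (BFGen.X j * BFGen.X i) (BFGen.X i * BFGen.X (j + 1)) ∈
        Subgroup.normalClosure BFGen.bfRels :=
      Subgroup.subset_normalClosure (Or.inl ⟨i, j, hij, rfl⟩)
    have h1 : (QuotientGroup.mk' (Subgroup.normalClosure BFGen.bfRels))
        (grel (BFGen.X j * BFGen.X i) (BFGen.X i * BFGen.X (j + 1))) = 1 := by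
      rw [QuotientGroup.mk'_apply, QuotientGroup.eq_one_iff]; exact hmem
    simp only [grel, map_mul, map_inv, QuotientGroup.mk'_apply, mul_inv_eq_one] at h1
    exact h1
  -- φ : GF → GBF
  have hφrels : ∀ r ∈ fRels, FreeGroup.lift (fun i => GBF.xg i) r = 1 := by
    rintro r ⟨i, j, hij, rfl⟩
    simp only [grel, map_mul, map_inv, FreeGroup.lift_apply_of]
    rw [hrel i j hij]
    group
  set φ : GF →* GBF := PresentedGroup.toGroup hφrels with hφ
  have hφof : ∀ i : ℕ, φ (PresentedGroup.of i) = GBF.xg i := fun i =>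
    PresentedGroup.toGroup.of hφrels
  -- the retraction ψ : GBF → GF, killing the a's and b's
  have hψrels : ∀ r ∈ BFGen.bfRels,
      FreeGroup.lift (fun g : BFGen => match g with
        | BFGen.x i => (PresentedGroup.of i : GF)
        | BFGen.a _ _ => 1
        | BFGen.b _ _ => 1) r = 1 := by
    intro r hr
    rcases hr with ⟨i, j, hij, rfl⟩ | ⟨r, s, i, j, _, _, _, rfl⟩ | ⟨r, s, j, _, _, _, rfl⟩ |
      ⟨i, s, j, _, _, _, rfl⟩ | ⟨r, i, s, j, _, _, _, _, rfl⟩ | ⟨r, s, i, j, _, _, _, rfl⟩ |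
      ⟨r, s, j, _, _, _, rfl⟩ | ⟨i, s, j, _, _, _, rfl⟩ | ⟨r, i, s, j, _, _, _, _, rfl⟩ |
      ⟨i, j, _, _, rfl⟩ | ⟨i, j, k, _, _, _, rfl⟩ | ⟨i, j, _, _, rfl⟩ |
      ⟨i, j, k, _, _, _, _, rfl⟩ | ⟨i, j, _, _, rfl⟩ | ⟨i, j, k, _, _, _, rfl⟩ |
      ⟨i, j, k, _, _, _, rfl⟩ | ⟨i, j, _, _, rfl⟩ | ⟨i, j, k, _, _, _, _, rfl⟩ |
      ⟨i, j, k, _, _, _, rfl⟩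
    case inl =>
      have hmem : grel (FreeGroup.of j * FreeGroup.of i)
          (FreeGroup.of i * FreeGroup.of (j + 1)) ∈ Subgroup.normalClosure fRels :=
        Subgroup.subset_normalClosure ⟨i, j, hij, rfl⟩
      have h1 : (QuotientGroup.mk' (Subgroup.normalClosure fRels))
          (grel (FreeGroup.of j * FreeGroup.of i)
            (FreeGroup.of i * FreeGroup.of (j + 1))) = 1 := by
        rw [QuotientGroup.mk'_apply, QuotientGroup.eq_one_iff]; exact hmem
      simp only [grel, map_mul, map_inv, QuotientGroup.mk'_apply] at h1
      simp [grel, BFGen.X, PresentedGroup.of]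
      simp [mul_assoc] at h1; exact h1
    all_goals simp [grel, BFGen.X, BFGen.A, BFGen.B]
  set ψ : GBF →* GF := PresentedGroup.toGroup hψrels with hψ
  have hψof : ∀ i : ℕ, ψ (GBF.xg i) = PresentedGroup.of i := fun i =>
    PresentedGroup.toGroup.of hψrels
  refine ⟨φ, hφof, ?_⟩
  have hcomp : ψ.comp φ = MonoidHom.id GF := by
    apply PresentedGroup.ext
    intro i
    simp [hφof i, hψof i]
  have h : ∀ g : GF, ψ (φ g) = g := fun g => by
    have := DFunLike.congr_fun hcomp g
    simpa using this
  intro a b hab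
  rw [← h a, ← h b, hab]
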